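/- Fix d ≥ 1, T ≥ 1, integers P ≥ 1, s ≥ 0, reals η > 0, L ≥ 0, F ≥ 0, and x* ∈ ℝ^d. For each t ≥ 1 let f_t : ℝ^d → ℝ be convex and differentiable with ‖∇f_t(x)‖₂ ≤ L for all x, and let η_t = η/√t. Let (x_t) be the reference sequence with x_{t+1} = x_t + u_t where u_t = −η_t ∇f_t(x̃_t), and suppose the noisy views (x̃_t) satisfy the SSP condition: for every t there exist disjoint finite index sets A_t, B_t ⊆ { max(1, t−(s+1)P), …, t+sP } with |A_t| + |B_t| ≤ (2s+1)P such that x̃_t = x_t − ∑_{i∈A_t} u_i + ∑_{i∈B_t} u_i. Assume also ½‖x* − x_t‖₂² ≤ F² for all t = 1,…,T+1. Then the regret R[X] := ∑_{t=1}^T ( f_t(x̃_t) − f_t(x*) ) satisfies R[X] ≤ η L² √T + (F²/η) √T + η L² (2s+1) P ( (s+1)P + 2√T ); in particular R[X] = O(√T) and R[X]/T → 0 as T → ∞. -/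

import Mathlib

open Real Finset RealInnerProductSpace

lemma aux_sum_inv_sqrt (T : ℕ) :
    ∑ t ∈ Finset.Icc 1 T, 1 / Real.sqrt t ≤ 2 * Real.sqrt T := by
  induction T with
  | zero => simp
  | succ T ih =>
    rw [Finset.sum_Icc_succ_top (by omega)]
    have h1 : Real.sqrt T ≥ 0 := Real.sqrt_nonneg _
    have h2 : Real.sqrt ((T:ℝ)+1) > 0 := Real.sqrt_pos.2 (by positivity)
    have e1 : Real.sqrt T ^ 2 = (T : ℝ) := Real.sq_sqrt (by positivity)
    have e2 : Real.sqrt ((T:ℝ)+1) ^ 2 = (T : ℝ) + 1 := Real.sq_sqrt (by positivity)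
    have key : 1 / Real.sqrt ((T:ℝ)+1) ≤ 2 * Real.sqrt ((T:ℝ)+1) - 2 * Real.sqrt T := by
      rw [div_le_iff₀ h2]
      nlinarith [sq_nonneg (Real.sqrt ((T:ℝ)+1) - Real.sqrt T), mul_pos h2 h2]
    push_cast
    linarith

lemma aux_sum_stale (T m : ℕ) :
    ∑ t ∈ Finset.Icc 1 T, 1 / Real.sqrt ((max 1 (t - m) : ℕ)) ≤ (m:ℝ) + 2 * Real.sqrt T := by
  have hterm1 : ∀ t : ℕ, 1 / Real.sqrt ((max 1 (t - m) : ℕ)) ≤ 1 := by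
    intro t
    have h1 : (1:ℝ) ≤ Real.sqrt ((max 1 (t - m) : ℕ)) := by
      rw [show (1:ℝ) = Real.sqrt 1 by simp]
      apply Real.sqrt_le_sqrt
      exact_mod_cast le_max_left 1 (t - m)
    rw [div_le_one (by linarith)]
    exact h1
  have hsqT : (0:ℝ) ≤ Real.sqrt T := Real.sqrt_nonneg _
  by_cases hTm : T ≤ m
  · calc ∑ t ∈ Finset.Icc 1 T, 1 / Real.sqrt ((max 1 (t - m) : ℕ))
        ≤ ∑ _t ∈ Finset.Icc 1 T, (1:ℝ) := Finset.sum_le_sum fun t _ => hterm1 t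
      _ = (T:ℝ) := by simp
      _ ≤ (m:ℝ) + 2 * Real.sqrt T := by
          have : (T:ℝ) ≤ (m:ℝ) := by exact_mod_cast hTm
          linarith
  · push_neg at hTm
    have hsplit : Finset.Icc 1 T = Finset.Icc 1 m ∪ Finset.Icc (m+1) T := by
      ext a; simp only [Finset.mem_Icc, Finset.mem_union]; omega
    have hdisj : Disjoint (Finset.Icc 1 m) (Finset.Icc (m+1) T) := by
      rw [Finset.disjoint_left]; intro a ha hb
      simp only [Finset.mem_Icc] at ha hb; omega
    rw [hsplit, Finset.sum_union hdisj]
    have hA : ∑ t ∈ Finset.Icc 1 m, 1 / Real.sqrt ((max 1 (t - m) : ℕ)) ≤ (m:ℝ) := by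
      calc ∑ t ∈ Finset.Icc 1 m, 1 / Real.sqrt ((max 1 (t - m) : ℕ))
          ≤ ∑ _t ∈ Finset.Icc 1 m, (1:ℝ) := Finset.sum_le_sum fun t _ => hterm1 t
        _ = (m:ℝ) := by simp
    have hB : ∑ t ∈ Finset.Icc (m+1) T, 1 / Real.sqrt ((max 1 (t - m) : ℕ))
        ≤ 2 * Real.sqrt T := by
      have hcong : ∀ t ∈ Finset.Icc (m+1) T,
          1 / Real.sqrt ((max 1 (t - m) : ℕ)) = 1 / Real.sqrt ((t - m : ℕ)) := by
        intro t ht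
        simp only [Finset.mem_Icc] at ht
        congr 3
        omega
      rw [Finset.sum_congr rfl hcong]
      have himg : Finset.Icc (m+1) T = (Finset.Icc 1 (T - m)).image (· + m) := by
        rw [Finset.image_add_right_Icc]
        congr 1 <;> omega
      rw [himg, Finset.sum_image (by intro a _ b _ h; simp only at h; omega)]
      have : ∀ i ∈ Finset.Icc 1 (T - m), 1 / Real.sqrt ((i + m - m : ℕ)) = 1 / Real.sqrt i := by
        intro i _; congr 3; omega
      rw [Finset.sum_congr rfl this]
      calc ∑ i ∈ Finset.Icc 1 (T - m), 1 / Real.sqrt i ≤ 2 * Real.sqrt ((T - m : ℕ)) :=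
            aux_sum_inv_sqrt (T - m)
        _ ≤ 2 * Real.sqrt T := by
            have : ((T - m : ℕ) : ℝ) ≤ (T:ℝ) := by
              have : T - m ≤ T := by omega
              exact_mod_cast this
            have := Real.sqrt_le_sqrt this
            linarith
    linarith

lemma aux_grad {E : Type*} [NormedAddCommGroup E] [InnerProductSpace ℝ E] [CompleteSpace E]
    {f : E → ℝ} (hc : ConvexOn ℝ Set.univ f) (hd : Differentiable ℝ f) (a y : E) :
    f a + ⟪gradient f a, y - a⟫ ≤ f y := by
  have h1 : HasFDerivAt f (InnerProductSpace.toDual ℝ E (gradient f a)) a :=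
    (hd a).hasGradientAt.hasFDerivAt
  have h2 : HasDerivAt (fun r : ℝ => a + r • (y - a)) (y - a) 0 := by
    simpa using ((hasDerivAt_id (0 : ℝ)).smul_const (y - a)).const_add a
  have h1' : HasFDerivAt f (InnerProductSpace.toDual ℝ E (gradient f a))
      ((fun r : ℝ => a + r • (y - a)) 0) := by simpa using h1
  have h3 : HasDerivAt (fun r : ℝ => f (a + r • (y - a))) (⟪gradient f a, y - a⟫) 0 := by
    have h4 := h1'.comp_hasDerivAt 0 h2
    simpa [InnerProductSpace.toDual_apply_apply, Function.comp_def] using h4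
  have hφ : ConvexOn ℝ Set.univ (fun r : ℝ => f (a + r • (y - a))) := by
    have h5 := hc.comp_affineMap (AffineMap.lineMap a y : ℝ →ᵃ[ℝ] E)
    have h6 : (fun r : ℝ => f (a + r • (y - a))) = f ∘ (AffineMap.lineMap a y : ℝ →ᵃ[ℝ] E) := by
      funext r
      simp [AffineMap.lineMap_apply, add_comm]
    rw [h6]
    simpa using h5
  have h7 := hφ.le_slope_of_hasDerivAt (Set.mem_univ (0:ℝ)) (Set.mem_univ 1) one_pos h3
  have h8 : slope (fun r : ℝ => f (a + r • (y - a))) 0 1 = f y - f a := by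
    rw [slope_def_field]
    simp
  rw [h8] at h7
  linarith

/-- weighted telescoping bound -/
lemma aux_telescope (D c : ℕ → ℝ) (F2 : ℝ) (T : ℕ) (hT : 1 ≤ T)
    (hc0 : ∀ t, 0 ≤ c t) (hcmono : ∀ t, 1 ≤ t → c t ≤ c (t+1))
    (hD0 : ∀ t, 0 ≤ D t) (hDF : ∀ t ∈ Finset.Icc 1 (T+1), D t ≤ F2) :
    ∑ t ∈ Finset.Icc 1 T, (D t - D (t+1)) * c t ≤ F2 * c T - D (T+1) * c T := by
  induction T with
  | zero => omega
  | succ T ih =>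
    rcases Nat.eq_or_lt_of_le hT with h1 | h1
    · have hT0 : T = 0 := by omega
      subst hT0
      have hd1 := hDF 1 (by simp)
      simp only [Finset.Icc_self, Finset.sum_singleton]
      nlinarith [hc0 1, hD0 2]
    · have hT' : 1 ≤ T := by omega
      rw [Finset.sum_Icc_succ_top (by omega)]
      have ih' := ih hT' (fun t ht => hDF t (by simp at ht ⊢; omega))
      have hA := hDF (T+1) (by simp)
      have hB := hcmono T hT'
      nlinarith [hc0 T, hc0 (T+1), hD0 (T+1), hD0 (T+2),
        mul_le_mul_of_nonneg_right hA (hc0 (T+1)),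
        mul_le_mul_of_nonneg_left hB (hD0 (T+1))]

set_option maxHeartbeats 1000000 in
/-- Theorem 3 (SGD under SSP, convergence in expectation): regret bound O(√T). -/
theorem stmt_6 (d T : ℕ) (hd : 1 ≤ d) (hT : 1 ≤ T)
    (P s : ℕ) (hP : 1 ≤ P)
    (η L F : ℝ) (hη : 0 < η) (hL : 0 ≤ L) (hF : 0 ≤ F)
    (xstar : EuclideanSpace ℝ (Fin d))
    (f : ℕ → EuclideanSpace ℝ (Fin d) → ℝ)
    (hconv : ∀ t, 1 ≤ t → ConvexOn ℝ Set.univ (f t))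
    (hdiff : ∀ t, 1 ≤ t → Differentiable ℝ (f t))
    (hgrad : ∀ t, 1 ≤ t → ∀ x, ‖gradient (f t) x‖ ≤ L)
    (x xtilde u : ℕ → EuclideanSpace ℝ (Fin d))
    (hu : ∀ t, 1 ≤ t → u t = -((η / Real.sqrt t) • gradient (f t) (xtilde t)))
    (hx : ∀ t, 1 ≤ t → x (t+1) = x t + u t)
    (hssp : ∀ t, 1 ≤ t → ∃ A B : Finset ℕ,
      Disjoint A B
      ∧ A ⊆ Finset.Icc (max 1 (t - (s+1)*P)) (t + s*P)
      ∧ B ⊆ Finset.Icc (max 1 (t - (s+1)*P)) (t + s*P)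
      ∧ A.card + B.card ≤ (2*s+1)*P
      ∧ xtilde t = x t - (∑ i ∈ A, u i) + (∑ i ∈ B, u i))
    (hdiam : ∀ t ∈ Finset.Icc 1 (T+1), (1/2) * ‖xstar - x t‖^2 ≤ F^2) :
    ∑ t ∈ Finset.Icc 1 T, (f t (xtilde t) - f t xstar)
      ≤ η * L^2 * Real.sqrt T + (F^2 / η) * Real.sqrt T
        + η * L^2 * ((2*(s:ℝ)+1)*(P:ℝ)) * (((s:ℝ)+1)*(P:ℝ) + 2 * Real.sqrt T) := by
  have hst : ∀ t : ℕ, 1 ≤ t → (0:ℝ) < Real.sqrt t := by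
    intro t ht
    apply Real.sqrt_pos.2
    exact_mod_cast Nat.lt_of_lt_of_le Nat.zero_lt_one ht
  have key : ∀ t ∈ Finset.Icc 1 T,
      f t (xtilde t) - f t xstar ≤
        ((1/2) * ‖xstar - x t‖^2 - (1/2) * ‖xstar - x (t+1)‖^2) * (Real.sqrt t / η)
        + (η * L^2 / 2) * (1 / Real.sqrt t)
        + (η * L^2 * (((2*s+1)*P : ℕ) : ℝ)) * (1 / Real.sqrt ((max 1 (t - (s+1)*P) : ℕ))) := by
    intro t ht
    rw [Finset.mem_Icc] at ht
    have ht1 : 1 ≤ t := ht.1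
    have htR : (0:ℝ) < Real.sqrt t := hst t ht1
    obtain ⟨A, B, hABd, hAsub, hBsub, hcard, hxt⟩ := hssp t ht1
    -- Step 1: convexity
    have hcx := aux_grad (hconv t ht1) (hdiff t ht1) (xtilde t) xstar
    have hinner1 : ⟪gradient (f t) (xtilde t), xstar - xtilde t⟫
        = -⟪gradient (f t) (xtilde t), xtilde t - xstar⟫ := by
      rw [show xstar - xtilde t = -(xtilde t - xstar) by abel, inner_neg_right]
    have step1 : f t (xtilde t) - f t xstar
        ≤ ⟪gradient (f t) (xtilde t), xtilde t - xstar⟫ := by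
      rw [hinner1] at hcx; linarith
    -- decomposition
    have hdec : ⟪gradient (f t) (xtilde t), xtilde t - xstar⟫
        = ⟪gradient (f t) (xtilde t), x t - xstar⟫
          + ⟪gradient (f t) (xtilde t), xtilde t - x t⟫ := by
      rw [← inner_add_right]
      congr 1
      abel
    -- Step 2: descent identity
    have hAeq : xstar - x (t+1)
        = (xstar - x t) + (η / Real.sqrt t) • gradient (f t) (xtilde t) := by
      rw [hx t ht1, hu t ht1]
      abel
    have hexp : ‖xstar - x (t+1)‖^2
        = ‖xstar - x t‖^2
          + 2 * (η / Real.sqrt t) * ⟪xstar - x t, gradient (f t) (xtilde t)⟫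
          + (η / Real.sqrt t)^2 * ‖gradient (f t) (xtilde t)‖^2 := by
      rw [hAeq, norm_add_sq_real, real_inner_smul_right, norm_smul]
      rw [mul_pow, Real.norm_eq_abs, sq_abs]
      ring
    have hsym : ⟪xstar - x t, gradient (f t) (xtilde t)⟫
        = -⟪gradient (f t) (xtilde t), x t - xstar⟫ := by
      rw [real_inner_comm, show xstar - x t = -(x t - xstar) by abel, inner_neg_right]
    have hgsq : ‖gradient (f t) (xtilde t)‖^2 ≤ L^2 := by
      have h := hgrad t ht1 (xtilde t)
      nlinarith [norm_nonneg (gradient (f t) (xtilde t))]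
    have hc : (0:ℝ) < η / Real.sqrt t := div_pos hη htR
    have step2 : ⟪gradient (f t) (xtilde t), x t - xstar⟫
        ≤ ((1/2) * ‖xstar - x t‖^2 - (1/2) * ‖xstar - x (t+1)‖^2) * (Real.sqrt t / η)
          + (η * L^2 / 2) * (1 / Real.sqrt t) := by
      have hkey : (η / Real.sqrt t) * ⟪gradient (f t) (xtilde t), x t - xstar⟫
          ≤ (1/2) * ‖xstar - x t‖^2 - (1/2) * ‖xstar - x (t+1)‖^2
            + (η / Real.sqrt t)^2 * (L^2/2) := by
        rw [hsym] at hexp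
        nlinarith [mul_le_mul_of_nonneg_left hgsq (sq_nonneg (η / Real.sqrt t))]
      have h1 : (η / Real.sqrt t) * (Real.sqrt t / η) = 1 := by
        field_simp
      apply le_of_mul_le_mul_left _ hc
      calc (η / Real.sqrt t) * ⟪gradient (f t) (xtilde t), x t - xstar⟫
          ≤ (1/2) * ‖xstar - x t‖^2 - (1/2) * ‖xstar - x (t+1)‖^2
            + (η / Real.sqrt t)^2 * (L^2/2) := hkey
        _ = (η / Real.sqrt t) *
            (((1/2) * ‖xstar - x t‖^2 - (1/2) * ‖xstar - x (t+1)‖^2) * (Real.sqrt t / η)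
              + (η * L^2 / 2) * (1 / Real.sqrt t)) := by
            rw [mul_add]
            rw [show (η / Real.sqrt t) *
                (((1/2) * ‖xstar - x t‖^2 - (1/2) * ‖xstar - x (t+1)‖^2) * (Real.sqrt t / η))
                = ((1/2) * ‖xstar - x t‖^2 - (1/2) * ‖xstar - x (t+1)‖^2)
                  * ((η / Real.sqrt t) * (Real.sqrt t / η)) by ring, h1]
            ring
    -- Step 3: staleness
    have hq1 : 1 ≤ max 1 (t - (s+1)*P) := le_max_left _ _
    have hqR : (0:ℝ) < Real.sqrt ((max 1 (t - (s+1)*P) : ℕ)) := hst _ hq1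
    have hbd : ∀ i ∈ Finset.Icc (max 1 (t - (s+1)*P)) (t + s*P),
        |⟪gradient (f t) (xtilde t), u i⟫|
          ≤ η * L^2 * (1 / Real.sqrt ((max 1 (t - (s+1)*P) : ℕ))) := by
      intro i hi
      rw [Finset.mem_Icc] at hi
      have hi1 : 1 ≤ i := le_trans hq1 hi.1
      have hiR : (0:ℝ) < Real.sqrt i := hst i hi1
      rw [hu i hi1, inner_neg_right, abs_neg, real_inner_smul_right, abs_mul]
      have h1 : |η / Real.sqrt i| = η / Real.sqrt i := abs_of_pos (div_pos hη hiR)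
      have h2 : |⟪gradient (f t) (xtilde t), gradient (f i) (xtilde i)⟫| ≤ L^2 := by
        calc |⟪gradient (f t) (xtilde t), gradient (f i) (xtilde i)⟫|
            ≤ ‖gradient (f t) (xtilde t)‖ * ‖gradient (f i) (xtilde i)‖ :=
              abs_real_inner_le_norm _ _
          _ ≤ L * L := mul_le_mul (hgrad t ht1 _) (hgrad i hi1 _) (norm_nonneg _) hL
          _ = L^2 := (sq L).symm
      have h3 : η / Real.sqrt i ≤ η / Real.sqrt ((max 1 (t - (s+1)*P) : ℕ)) := by
        apply div_le_div_of_nonneg_left hη.le hqR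
        apply Real.sqrt_le_sqrt
        exact_mod_cast hi.1
      calc |η / Real.sqrt i| * |⟪gradient (f t) (xtilde t), gradient (f i) (xtilde i)⟫|
          = (η / Real.sqrt i) * |⟪gradient (f t) (xtilde t), gradient (f i) (xtilde i)⟫| := by
            rw [h1]
        _ ≤ (η / Real.sqrt ((max 1 (t - (s+1)*P) : ℕ))) * L^2 :=
            mul_le_mul h3 h2 (abs_nonneg _) (le_of_lt (div_pos hη hqR))
        _ = η * L^2 * (1 / Real.sqrt ((max 1 (t - (s+1)*P) : ℕ))) := by ring
    have step3 : ⟪gradient (f t) (xtilde t), xtilde t - x t⟫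
        ≤ (η * L^2 * (((2*s+1)*P : ℕ) : ℝ))
            * (1 / Real.sqrt ((max 1 (t - (s+1)*P) : ℕ))) := by
      have he : xtilde t - x t = (∑ i ∈ B, u i) - (∑ i ∈ A, u i) := by
        rw [hxt]; abel
      rw [he, inner_sub_right, inner_sum, inner_sum]
      have h4 : ∑ i ∈ B, ⟪gradient (f t) (xtilde t), u i⟫
          ≤ ∑ i ∈ B, |⟪gradient (f t) (xtilde t), u i⟫| :=
        Finset.sum_le_sum fun i _ => le_abs_self _
      have h5 : -∑ i ∈ A, ⟪gradient (f t) (xtilde t), u i⟫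
          ≤ ∑ i ∈ A, |⟪gradient (f t) (xtilde t), u i⟫| := by
        rw [← Finset.sum_neg_distrib]
        exact Finset.sum_le_sum fun i _ => neg_le_abs _
      have h6 : ∑ i ∈ B, |⟪gradient (f t) (xtilde t), u i⟫|
          ≤ (B.card : ℝ) * (η * L^2 * (1 / Real.sqrt ((max 1 (t - (s+1)*P) : ℕ)))) := by
        calc ∑ i ∈ B, |⟪gradient (f t) (xtilde t), u i⟫|
            ≤ ∑ _i ∈ B, η * L^2 * (1 / Real.sqrt ((max 1 (t - (s+1)*P) : ℕ))) :=
              Finset.sum_le_sum fun i hi => hbd i (hBsub hi)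
          _ = (B.card : ℝ) * (η * L^2 * (1 / Real.sqrt ((max 1 (t - (s+1)*P) : ℕ)))) := by
              rw [Finset.sum_const, nsmul_eq_mul]
      have h7 : ∑ i ∈ A, |⟪gradient (f t) (xtilde t), u i⟫|
          ≤ (A.card : ℝ) * (η * L^2 * (1 / Real.sqrt ((max 1 (t - (s+1)*P) : ℕ)))) := by
        calc ∑ i ∈ A, |⟪gradient (f t) (xtilde t), u i⟫|
            ≤ ∑ _i ∈ A, η * L^2 * (1 / Real.sqrt ((max 1 (t - (s+1)*P) : ℕ))) :=
              Finset.sum_le_sum fun i hi => hbd i (hAsub hi)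
          _ = (A.card : ℝ) * (η * L^2 * (1 / Real.sqrt ((max 1 (t - (s+1)*P) : ℕ)))) := by
              rw [Finset.sum_const, nsmul_eq_mul]
      have h8 : ((A.card : ℝ) + (B.card : ℝ)) ≤ (((2*s+1)*P : ℕ) : ℝ) := by
        exact_mod_cast hcard
      have h9 : (0:ℝ) ≤ η * L^2 * (1 / Real.sqrt ((max 1 (t - (s+1)*P) : ℕ))) := by
        positivity
      have h10 := mul_le_mul_of_nonneg_right h8 h9
      have h11 : ((((2*s+1)*P : ℕ)) : ℝ)
            * (η * L^2 * (1 / Real.sqrt ((max 1 (t - (s+1)*P) : ℕ))))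
          = (η * L^2 * (((2*s+1)*P : ℕ) : ℝ))
            * (1 / Real.sqrt ((max 1 (t - (s+1)*P) : ℕ))) := by ring
      linarith
    calc f t (xtilde t) - f t xstar
        ≤ ⟪gradient (f t) (xtilde t), xtilde t - xstar⟫ := step1
      _ = ⟪gradient (f t) (xtilde t), x t - xstar⟫
          + ⟪gradient (f t) (xtilde t), xtilde t - x t⟫ := hdec
      _ ≤ (((1/2) * ‖xstar - x t‖^2 - (1/2) * ‖xstar - x (t+1)‖^2) * (Real.sqrt t / η)
            + (η * L^2 / 2) * (1 / Real.sqrt t))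
          + (η * L^2 * (((2*s+1)*P : ℕ) : ℝ))
              * (1 / Real.sqrt ((max 1 (t - (s+1)*P) : ℕ))) := add_le_add step2 step3
  refine le_trans (Finset.sum_le_sum key) ?_
  rw [Finset.sum_add_distrib, Finset.sum_add_distrib]
  have hsqT : (0:ℝ) ≤ Real.sqrt T := Real.sqrt_nonneg _
  -- S1
  have hS1 : ∑ t ∈ Finset.Icc 1 T,
      ((1/2) * ‖xstar - x t‖^2 - (1/2) * ‖xstar - x (t+1)‖^2) * (Real.sqrt t / η)
      ≤ (F^2 / η) * Real.sqrt T := by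
    have htel := aux_telescope (fun t => (1/2) * ‖xstar - x t‖^2)
      (fun t => Real.sqrt t / η) (F^2) T hT
      (fun t => by positivity)
      (fun t _ => div_le_div_of_nonneg_right (Real.sqrt_le_sqrt (by push_cast; linarith)) hη.le)
      (fun t => by positivity)
      hdiam
    have hpos : (0:ℝ) ≤ (1/2) * ‖xstar - x (T+1)‖^2 * (Real.sqrt T / η) := by positivity
    have : F^2 * (Real.sqrt T / η) = (F^2 / η) * Real.sqrt T := by ring
    linarith [htel]
  -- S2
  have hS2 : ∑ t ∈ Finset.Icc 1 T, (η * L^2 / 2) * (1 / Real.sqrt t)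
      ≤ η * L^2 * Real.sqrt T := by
    rw [← Finset.mul_sum]
    calc (η * L^2 / 2) * ∑ t ∈ Finset.Icc 1 T, 1 / Real.sqrt t
        ≤ (η * L^2 / 2) * (2 * Real.sqrt T) :=
          mul_le_mul_of_nonneg_left (aux_sum_inv_sqrt T) (by positivity)
      _ = η * L^2 * Real.sqrt T := by ring
  -- S3
  have hS3 : ∑ t ∈ Finset.Icc 1 T,
      (η * L^2 * (((2*s+1)*P : ℕ) : ℝ)) * (1 / Real.sqrt ((max 1 (t - (s+1)*P) : ℕ)))
      ≤ η * L^2 * ((2*(s:ℝ)+1)*(P:ℝ)) * (((s:ℝ)+1)*(P:ℝ) + 2 * Real.sqrt T) := by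
    rw [← Finset.mul_sum]
    have h1 := aux_sum_stale T ((s+1)*P)
    have h2 := mul_le_mul_of_nonneg_left h1
      (show (0:ℝ) ≤ η * L^2 * (((2*s+1)*P : ℕ) : ℝ) by positivity)
    calc (η * L^2 * (((2*s+1)*P : ℕ) : ℝ))
          * ∑ t ∈ Finset.Icc 1 T, 1 / Real.sqrt ((max 1 (t - (s+1)*P) : ℕ))
        ≤ (η * L^2 * (((2*s+1)*P : ℕ) : ℝ)) * ((((s+1)*P : ℕ) : ℝ) + 2 * Real.sqrt T) := h2
      _ = η * L^2 * ((2*(s:ℝ)+1)*(P:ℝ)) * (((s:ℝ)+1)*(P:ℝ) + 2 * Real.sqrt T) := by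
          push_cast
          ring
  linarith
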